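/- Let 0 < q < 1 and suppose u is a bounded positive solution of u(x) = G[u^q dμ](x) + G[ν](x) + h(x) on Ω, where h ≥ 0, and the lower bound u ≥ (1−q)^{1/(1−q)} G[μ]^{1/(1−q)} holds (from the sublinear lower bound lemma) together with the iterated inequality G[μ]^s ≤ s·G[G[μ]^{s−1} dμ] for s ≥ 1. Then u(x) ≥ (1−q)^{1/(1−q)} G[μ](x)^{1/(1−q)} + G[ν](x) + h(x) for all x ∈ Ω. -/

import Mathlib

open MeasureTheory
open scoped ENNReal

/-- Lower estimate of Brezis–Kamin type: if `0 < q < 1`, `u` is a bounded positive solution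
of `u = G[u^q dμ] + G[ν] + h` on `Ω`, the sublinear lower bound
`u ≥ (1−q)^{1/(1−q)} G[μ]^{1/(1−q)}` holds, and the iterated inequality
`G[μ]^s ≤ s·G[G[μ]^{s−1} dμ]` holds for `s ≥ 1`, then
`u(x) ≥ (1−q)^{1/(1−q)} G[μ](x)^{1/(1−q)} + G[ν](x) + h(x)` for all `x`. -/
theorem brezis_kamin_lower_estimate {Ω : Type*} [MeasurableSpace Ω]
    (G : Ω → Ω → ℝ≥0∞) (μ ν : Measure Ω)
    (q : ℝ) (hq0 : 0 < q) (hq1 : q < 1)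
    (u h : Ω → ℝ≥0∞) (hub : (⨆ z, u z) ≠ ⊤) (hupos : ∀ x, 0 < u x)
    (heq : ∀ x, u x = (∫⁻ y, G x y * (u y) ^ q ∂μ) + (∫⁻ y, G x y ∂ν) + h x)
    (hlow : ∀ x, ENNReal.ofReal ((1 - q) ^ (1 / (1 - q))) * (∫⁻ y, G x y ∂μ) ^ (1 / (1 - q))
      ≤ u x)
    (hiter : ∀ s : ℝ, 1 ≤ s → ∀ x,
      (∫⁻ y, G x y ∂μ) ^ s
        ≤ ENNReal.ofReal s * ∫⁻ y, G x y * (∫⁻ z, G y z ∂μ) ^ (s - 1) ∂μ) :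
    ∀ x, ENNReal.ofReal ((1 - q) ^ (1 / (1 - q))) * (∫⁻ y, G x y ∂μ) ^ (1 / (1 - q))
        + (∫⁻ y, G x y ∂ν) + h x ≤ u x := by
  intro x
  set s : ℝ := 1 / (1 - q) with hs
  have h1q : (0:ℝ) < 1 - q := by linarith
  have hs1 : 1 ≤ s := by
    rw [hs, le_div_iff₀ h1q]; linarith
  have hsq : s * q = s - 1 := by
    rw [hs]; field_simp; ring
  set c : ℝ≥0∞ := ENNReal.ofReal ((1 - q) ^ s) with hc
  have hcq : c ^ q = c * ENNReal.ofReal s := by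
    rw [hc, ENNReal.ofReal_rpow_of_pos (Real.rpow_pos_of_pos h1q s),
      ← Real.rpow_mul h1q.le, hsq, Real.rpow_sub h1q, Real.rpow_one,
      ← ENNReal.ofReal_mul (Real.rpow_pos_of_pos h1q s).le]
    congr 1
    rw [hs]
    field_simp
  have hcqT : c ^ q ≠ ⊤ := ENNReal.rpow_ne_top_of_nonneg hq0.le ENNReal.ofReal_ne_top
  have hkey : c * (∫⁻ y, G x y ∂μ) ^ s ≤ ∫⁻ y, G x y * (u y) ^ q ∂μ := by
    calc c * (∫⁻ y, G x y ∂μ) ^ s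
        ≤ c * (ENNReal.ofReal s * ∫⁻ y, G x y * (∫⁻ z, G y z ∂μ) ^ (s - 1) ∂μ) :=
          mul_le_mul_right (hiter s hs1 x) c
      _ = c ^ q * ∫⁻ y, G x y * (∫⁻ z, G y z ∂μ) ^ (s - 1) ∂μ := by
          rw [hcq, mul_assoc]
      _ = ∫⁻ y, c ^ q * (G x y * (∫⁻ z, G y z ∂μ) ^ (s - 1)) ∂μ :=
          (lintegral_const_mul' _ _ hcqT).symm
      _ = ∫⁻ y, G x y * (c ^ q * (∫⁻ z, G y z ∂μ) ^ (s - 1)) ∂μ := by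
          simp_rw [mul_left_comm]
      _ ≤ ∫⁻ y, G x y * (u y) ^ q ∂μ := by
          refine lintegral_mono fun y => mul_le_mul_right ?_ _
          have : c ^ q * (∫⁻ z, G y z ∂μ) ^ (s - 1)
              = (c * (∫⁻ z, G y z ∂μ) ^ s) ^ q := by
            rw [ENNReal.mul_rpow_of_nonneg _ _ hq0.le, ← ENNReal.rpow_mul, hsq]
          rw [this]
          exact ENNReal.rpow_le_rpow (hlow y) hq0.le
  rw [heq x]
  gcongr
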